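/- In the Erlang-C setup with 0 < R < n, fix a ∈ ℝ and define f_a′(x) := e^{−(1/μ)∫₀ˣ b(u) du}·∫_{−∞}^x (1/μ)·(P(Y(∞) ≤ a) − 1_{(−∞,a]}(y))·e^{(1/μ)∫₀ʸ b(u) du} dy. Then f_a′ is continuous and differentiable at every x ≠ a (with a left derivative at x = a), and: |f_a′(x)| ≤ 4/μ for x ≤ −ζ and |f_a′(x)| ≤ 1/(μ|ζ|) for x ≥ −ζ; moreover |f_a″(x)| ≤ 2/μ for all x ∈ ℝ, where f_a″(a) is interpreted as the left derivative of f_a′ at a. -/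

import Mathlib

open MeasureTheory Set


namespace ErlangCAux

lemma integral_exp_neg_mul_Ioi {c : ℝ} (hc : 0 < c) (a : ℝ) :
    ∫ y in Ioi a, Real.exp (-(c * y)) = Real.exp (-(c * a)) / c := by
  have h := integral_comp_mul_left_Ioi (fun u => Real.exp (-u)) a hc
  simp only [smul_eq_mul] at h
  rw [h, integral_exp_neg_Ioi]
  field_simp

lemma integrableOn_exp_neg_mul_Ioi {c : ℝ} (hc : 0 < c) (a : ℝ) :
    IntegrableOn (fun y => Real.exp (-(c * y))) (Ioi a) := by
  simpa [neg_mul] using exp_neg_integrableOn_Ioi a hc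

lemma integrableOn_exp_mul_Iic {c : ℝ} (hc : 0 < c) (x : ℝ) :
    IntegrableOn (fun y => Real.exp (c * y)) (Iic x) := by
  have e := integrableOn_map_equiv (μ := (volume : Measure ℝ))
      (Homeomorph.neg ℝ).toMeasurableEquiv (f := fun y => Real.exp (c * y)) (s := Iic x)
  have hmap : Measure.map (⇑(Homeomorph.neg ℝ).toMeasurableEquiv) volume = volume := by
    have : (⇑(Homeomorph.neg ℝ).toMeasurableEquiv : ℝ → ℝ) = fun t : ℝ => -t := rfl
    rw [this]
    exact Measure.map_neg_eq_self (volume : Measure ℝ)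
  rw [hmap] at e
  rw [e]
  have hpre : ((Homeomorph.neg ℝ).toMeasurableEquiv ⁻¹' (Iic x)) = Ici (-x) := by
    ext t
    simp [neg_le]
  rw [hpre]
  have h2 : IntegrableOn (fun y => Real.exp (-(c * y))) (Ici (-x)) := by
    rw [integrableOn_Ici_iff_integrableOn_Ioi]
    exact integrableOn_exp_neg_mul_Ioi hc _
  exact h2.congr_fun (fun t _ => by simp [Function.comp, mul_neg]) measurableSet_Ici

lemma integral_exp_mul_Iic {c : ℝ} (hc : 0 < c) (x : ℝ) :
    ∫ y in Iic x, Real.exp (c * y) = Real.exp (c * x) / c := by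
  have h := integral_comp_neg_Iic x (fun t => Real.exp (-(c * t)))
  simp only [mul_neg, neg_neg] at h
  rw [h, integral_exp_neg_mul_Ioi hc, mul_neg, neg_neg]

lemma integral_exp_mul_Ioi {c : ℝ} (hc : c < 0) (x : ℝ) :
    ∫ y in Ioi x, Real.exp (c * y) = -(Real.exp (c * x) / c) := by
  have h := integral_exp_neg_mul_Ioi (c := -c) (by linarith) x
  simp only [neg_mul, neg_neg] at h
  rw [h]; ring

lemma integrableOn_exp_mul_Ioi {c : ℝ} (hc : c < 0) (x : ℝ) :
    IntegrableOn (fun y => Real.exp (c * y)) (Ioi x) := by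
  have := integrableOn_exp_neg_mul_Ioi (c := -c) (by linarith) x
  simpa [neg_mul, neg_neg] using this

end ErlangCAux

namespace Erl

open ErlangCAux

noncomputable def q (ζ : ℝ) (x : ℝ) : ℝ :=
  if x ≤ -ζ then Real.exp (-(x^2/2)) else Real.exp (ζ*x + ζ^2/2)

lemma q_pos (ζ x : ℝ) : 0 < q ζ x := by
  unfold q; split <;> exact Real.exp_pos _

lemma q_gauss {ζ x : ℝ} (h : x ≤ -ζ) : q ζ x = Real.exp (-(x^2/2)) := if_pos h

lemma q_exp {ζ x : ℝ} (h : -ζ ≤ x) : q ζ x = Real.exp (ζ*x + ζ^2/2) := by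
  unfold q
  split
  · have hx : x = -ζ := le_antisymm ‹x ≤ -ζ› h
    subst hx; congr 1; ring
  · rfl

lemma q_cont (ζ : ℝ) : Continuous (q ζ) := by
  unfold q
  apply Continuous.if_le
  · exact Real.continuous_exp.comp (by continuity)
  · exact Real.continuous_exp.comp (by continuity)
  · exact continuous_id
  · exact continuous_const
  · intro x hx
    subst hx; congr 1; ring

lemma gauss_integrable : Integrable (fun y : ℝ => Real.exp (-(y^2/2))) := by
  have h := integrable_exp_neg_mul_sq (b := (1/2 : ℝ)) (by norm_num)
  refine h.congr ?_
  filter_upwards with y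
  congr 1; ring

lemma q_integrable {ζ : ℝ} (hz : ζ < 0) : Integrable (q ζ) := by
  rw [← integrableOn_univ, ← Set.Iic_union_Ioi (a := -ζ)]
  refine IntegrableOn.union ?_ ?_
  · exact (gauss_integrable.integrableOn).congr_fun
      (fun t ht => (q_gauss ht).symm) measurableSet_Iic
  · have h1 : IntegrableOn (fun y : ℝ => Real.exp (ζ^2/2) * Real.exp (ζ*y)) (Ioi (-ζ)) :=
      (ErlangCAux.integrableOn_exp_mul_Ioi hz (-ζ)).const_mul _
    refine h1.congr_fun (fun t ht => ?_) measurableSet_Ioi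
    rw [q_exp (le_of_lt ht)]; dsimp only; rw [← Real.exp_add]
    congr 1; ring

lemma integral_q_Ioi {ζ : ℝ} (hz : ζ < 0) {x : ℝ} (hx : -ζ ≤ x) :
    ∫ y in Ioi x, q ζ y = Real.exp (ζ*x + ζ^2/2) / (-ζ) := by
  have hcong : ∀ y ∈ Ioi x, q ζ y = Real.exp (ζ^2/2) * Real.exp (ζ*y) := by
    intro y hy
    rw [q_exp (le_trans hx (le_of_lt hy)), ← Real.exp_add]
    congr 1; ring
  rw [setIntegral_congr_fun measurableSet_Ioi hcong, integral_const_mul,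
    ErlangCAux.integral_exp_mul_Ioi hz, Real.exp_add]
  rw [div_neg]
  ring

lemma gauss_Iic_le (x : ℝ) :
    ∫ y in Iic x, Real.exp (-(y^2/2)) ≤ Real.sqrt (2*Real.pi) := by
  have h1 : ∫ y in Iic x, Real.exp (-(y^2/2)) ≤ ∫ y : ℝ, Real.exp (-(y^2/2)) :=
    setIntegral_le_integral gauss_integrable
      (Filter.Eventually.of_forall (fun y => (Real.exp_pos _).le))
  refine h1.trans ?_
  have h2 : ∫ y : ℝ, Real.exp (-(y^2/2)) = Real.sqrt (Real.pi / (1/2)) := by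
    rw [← integral_gaussian (1/2)]
    congr 1; funext y; congr 1; ring
  rw [h2]
  apply le_of_eq
  congr 1
  ring

lemma mills_left {x : ℝ} (hx : x < 0) :
    ∫ y in Iic x, Real.exp (-(y^2/2)) ≤ Real.exp (-(x^2/2)) / (-x) := by
  have hc : (0:ℝ) < -x := by linarith
  have hmono : ∫ y in Iic x, Real.exp (-(y^2/2))
      ≤ ∫ y in Iic x, Real.exp (x^2/2) * Real.exp ((-x)*y) := by
    refine setIntegral_mono_on gauss_integrable.integrableOn
      ((ErlangCAux.integrableOn_exp_mul_Iic hc x).const_mul _) measurableSet_Iic ?_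
    intro y _
    rw [← Real.exp_add, Real.exp_le_exp]
    nlinarith [sq_nonneg (x - y)]
  refine hmono.trans (le_of_eq ?_)
  rw [integral_const_mul, ErlangCAux.integral_exp_mul_Iic hc,
    show Real.exp (x^2/2) * (Real.exp (-x*x) / -x)
      = (Real.exp (x^2/2) * Real.exp (-x*x)) / -x by ring, ← Real.exp_add]
  congr 2
  ring

lemma Q_hasDeriv {ζ : ℝ} (hz : ζ < 0) (t : ℝ) :
    HasDerivAt (fun u => ∫ y in Iic u, q ζ y) (q ζ t) t := by
  have hint := q_integrable hz
  have heq : (fun u => ∫ y in Iic u, q ζ y)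
      = fun u => (∫ y in Iic (0:ℝ), q ζ y) + ∫ y in (0:ℝ)..u, q ζ y := by
    funext u
    rw [← intervalIntegral.integral_Iic_sub_Iic hint.integrableOn hint.integrableOn]
    ring
  rw [heq]
  exact (intervalIntegral.integral_hasDerivAt_right
    (hint.intervalIntegrable)
    ((q_cont ζ).stronglyMeasurable.stronglyMeasurableAtFilter)
    (q_cont ζ).continuousAt).const_add _

lemma tail_eq {ζ : ℝ} (hz : ζ < 0) (x : ℝ) :
    ∫ y in Ioi x, q ζ y = (∫ y : ℝ, q ζ y) - ∫ y in Iic x, q ζ y := by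
  have hint := q_integrable hz
  rw [← intervalIntegral.integral_Iic_add_Ioi (b := x) hint.integrableOn hint.integrableOn]
  ring

lemma tail_bound {ζ : ℝ} (hz : ζ < 0) {x : ℝ} (h0 : 0 < x) (hx : x ≤ -ζ) :
    ∫ y in Ioi x, q ζ y ≤ Real.exp (-(x^2/2)) / x := by
  set T := ∫ y : ℝ, q ζ y with hT
  set G : ℝ → ℝ := fun t => Real.exp (-(t^2/2)) / t - (T - ∫ y in Iic t, q ζ y) with hG
  have hGd : ∀ t : ℝ, 0 < t → HasDerivAt G
      (-(Real.exp (-(t^2/2)) * (t^2+1) / t^2) + q ζ t) t := by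
    intro t ht
    have h1 : HasDerivAt (fun u : ℝ => -(u^2/2)) (-t) t := by
      have := ((hasDerivAt_pow 2 t).div_const 2).neg
      exact this.congr_deriv (by ring)
    have h2 : HasDerivAt (fun u : ℝ => Real.exp (-(u^2/2))) (Real.exp (-(t^2/2)) * (-t)) t :=
      h1.exp
    have h3 : HasDerivAt (fun u : ℝ => Real.exp (-(u^2/2)) / u)
        ((Real.exp (-(t^2/2)) * (-t) * t - Real.exp (-(t^2/2)) * 1) / t^2) t :=
      h2.div (hasDerivAt_id t) (ne_of_gt ht)
    have h4 : HasDerivAt (fun u => T - ∫ y in Iic u, q ζ y) (-(q ζ t)) t :=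
      (Q_hasDeriv hz t).const_sub T
    have := h3.sub h4
    refine this.congr_deriv ?_
    field_simp
    ring
  have hanti : AntitoneOn G (Icc x (-ζ)) := by
    apply antitoneOn_of_deriv_nonpos (convex_Icc _ _)
    · intro t ht
      exact (hGd t (lt_of_lt_of_le h0 ht.1)).continuousAt.continuousWithinAt
    · intro t ht
      rw [interior_Icc] at ht
      exact (hGd t (lt_trans h0 ht.1)).differentiableAt.differentiableWithinAt
    · intro t ht
      rw [interior_Icc] at ht
      rw [(hGd t (lt_trans h0 ht.1)).deriv]
      have hq : q ζ t = Real.exp (-(t^2/2)) := q_gauss (le_of_lt ht.2)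
      rw [hq]
      have ht0 : (0:ℝ) < t := lt_trans h0 ht.1
      have ht2 : (0:ℝ) < t^2 := pow_pos ht0 2
      have hE : (0:ℝ) < Real.exp (-(t^2/2)) := Real.exp_pos _
      have h6 : Real.exp (-(t^2/2)) * (t^2+1) / t^2
          = Real.exp (-(t^2/2)) + Real.exp (-(t^2/2))/t^2 := by
        field_simp
      rw [h6]
      have h7 : 0 < Real.exp (-(t^2/2))/t^2 := div_pos hE ht2
      linarith
  have hGz : G (-ζ) = 0 := by
    have h1 : T - ∫ y in Iic (-ζ), q ζ y = ∫ y in Ioi (-ζ), q ζ y := (tail_eq hz (-ζ)).symm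
    have h2 : ∫ y in Ioi (-ζ), q ζ y = Real.exp (ζ*(-ζ) + ζ^2/2) / (-ζ) :=
      integral_q_Ioi hz le_rfl
    rw [hG]
    simp only
    rw [h1, h2]
    have : ζ*(-ζ) + ζ^2/2 = -((-ζ)^2/2) := by ring
    rw [this]
    exact sub_self _
  have hge : 0 ≤ G x := by
    have := hanti (left_mem_Icc.mpr hx) (right_mem_Icc.mpr hx) hx
    rw [hGz] at this
    exact this
  have h5 := tail_eq hz x
  rw [hG] at hge
  simp only at hge
  rw [h5]
  linarith

lemma aux_div1 {mu x : ℝ} (hmu : 0 < mu) (hx : (1/2:ℝ) ≤ x) : 1/(mu*x) ≤ 4/mu := by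
  rw [div_le_div_iff₀ (by nlinarith) hmu]
  nlinarith

lemma aux_div2 {mu : ℝ} (hmu : 0 < mu) : 3/mu ≤ 4/mu := by
  rw [div_le_div_iff₀ hmu hmu]
  nlinarith

end Erl

set_option maxHeartbeats 1000000 in
/-- Kolmogorov gradient bounds for the Erlang-C model: the derivative `f_a′` of
the solution of the Poisson equation for the test function `1_{(-∞,a]}` is
continuous, differentiable away from `a` (with a left derivative everywhere),
and satisfies explicit first- and second-derivative bounds. -/
theorem erlangC_kolmogorov_gradient_bounds
    (lam mu : ℝ) (n : ℕ)
    (hlam : 0 < lam) (hmu : 0 < mu) (hn : 1 ≤ n)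
    (R δ ζ : ℝ)
    (hR : R = lam / mu) (hR0 : 0 < R) (hRn : R < (n : ℝ))
    (hδ : δ = 1 / Real.sqrt R) (hζ : ζ = δ * (R - (n : ℝ)))
    (b : ℝ → ℝ)
    (hb : ∀ x : ℝ, b x = if x ≤ -ζ then -(mu * x) else mu * ζ)
    (p : ℝ → ℝ)
    (hp : ∀ x : ℝ, p x = Real.exp ((1 / mu) * ∫ y in (0:ℝ)..x, b y))
    (kappa : ℝ) (hkappa : 0 < kappa)
    (nu : ℝ → ℝ) (hnu : ∀ x : ℝ, nu x = kappa * p x)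
    (hnu_norm : (∫ x : ℝ, nu x) = 1)
    (a : ℝ)
    (Fa : ℝ) (hFa : Fa = ∫ x in Set.Iic a, nu x)
    (f' : ℝ → ℝ)
    (hf' : ∀ x : ℝ, f' x = (p x)⁻¹ *
      ∫ y in Set.Iic x, (1 / mu) * (Fa - if y ≤ a then 1 else 0) * p y) :
    Continuous f' ∧
    (∀ x : ℝ, x ≤ -ζ → |f' x| ≤ 4 / mu) ∧
    (∀ x : ℝ, -ζ ≤ x → |f' x| ≤ 1 / (mu * |ζ|)) ∧
    (∀ x : ℝ, ∃ L : ℝ,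
      HasDerivWithinAt f' L (Set.Iic x) x ∧ |L| ≤ 2 / mu ∧
      (x ≠ a → HasDerivAt f' L x)) := by
  have hz : ζ < 0 := by
    have h1 : 0 < Real.sqrt R := Real.sqrt_pos.mpr hR0
    have h2 : 0 < δ := by rw [hδ]; positivity
    rw [hζ]
    have h3 : R - (n:ℝ) < 0 := by linarith
    exact mul_neg_of_pos_of_neg h2 h3
  have hmz : 0 < -ζ := by linarith
  -- b is continuous
  have b_cont : Continuous b := by
    have b_eq : b = fun x => mu * max (-x) ζ := by
      funext x; rw [hb]
      rcases le_or_gt x (-ζ) with h | h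
      · rw [if_pos h, max_eq_left (by linarith)]; ring
      · rw [if_neg (not_le.mpr h), max_eq_right (by linarith)]
    rw [b_eq]
    exact continuous_const.mul (continuous_neg.max continuous_const)
  have b_int : ∀ u v : ℝ, IntervalIntegrable b volume u v :=
    fun u v => b_cont.intervalIntegrable u v
  -- p = q ζ
  have hpq : p = Erl.q ζ := by
    funext x
    rw [hp]
    rcases le_or_gt x (-ζ) with h | h
    · rw [Erl.q_gauss h]
      congr 1
      have hcong : ∀ y ∈ Set.uIcc (0:ℝ) x, b y = -(mu*y) := by
        intro y hy
        rcases Set.mem_uIcc.mp hy with ⟨h1, h2⟩ | ⟨h1, h2⟩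
        · rw [hb, if_pos (le_trans h2 h)]
        · rw [hb, if_pos (by linarith)]
      rw [intervalIntegral.integral_congr hcong]
      have hval : ∫ y in (0:ℝ)..x, -(mu*y) = -(mu * ((x^2 - 0^2)/2)) := by
        rw [intervalIntegral.integral_neg, intervalIntegral.integral_const_mul, integral_id]
      rw [hval]
      field_simp
      ring
    · rw [Erl.q_exp (le_of_lt h)]
      congr 1
      rw [← intervalIntegral.integral_add_adjacent_intervals (b_int 0 (-ζ)) (b_int (-ζ) x)]
      have hc1 : ∀ y ∈ Set.uIcc (0:ℝ) (-ζ), b y = -(mu*y) := by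
        intro y hy
        rw [Set.uIcc_of_le (le_of_lt hmz)] at hy
        rw [hb, if_pos hy.2]
      have hc2 : ∀ y ∈ Set.uIcc (-ζ) x, b y = mu*ζ := by
        intro y hy
        rw [Set.uIcc_of_le (le_of_lt h)] at hy
        rw [hb]
        split
        · have hy2 : y = -ζ := le_antisymm ‹_› hy.1
          rw [hy2]; ring
        · rfl
      rw [intervalIntegral.integral_congr hc1, intervalIntegral.integral_congr hc2,
        intervalIntegral.integral_const]
      have hval : ∫ y in (0:ℝ)..(-ζ), -(mu*y) = -(mu * (((-ζ)^2 - 0^2)/2)) := by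
        rw [intervalIntegral.integral_neg, intervalIntegral.integral_const_mul, integral_id]
      rw [hval, smul_eq_mul]
      field_simp
      ring
  rw [hpq] at hf' hnu
  set H : ℝ → ℝ := fun y => (1 / mu) * (Fa - if y ≤ a then 1 else 0) * Erl.q ζ y with hHdef
  have hq_int : Integrable (Erl.q ζ) := Erl.q_integrable hz
  have hq_pos : ∀ x, 0 < Erl.q ζ x := Erl.q_pos ζ
  have hFa0 : 0 ≤ Fa := by
    rw [hFa]
    exact setIntegral_nonneg measurableSet_Iic
      (fun y _ => by rw [hnu]; exact mul_nonneg hkappa.le (Erl.q_pos ζ y).le)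
  have hnu_int : Integrable nu :=
    (hq_int.const_mul kappa).congr
      (Filter.Eventually.of_forall (fun x => (hnu x).symm))
  have hFa1 : Fa ≤ 1 := by
    rw [hFa, ← hnu_norm]
    exact setIntegral_le_integral hnu_int
      (Filter.Eventually.of_forall fun y => by
        rw [hnu]; exact mul_nonneg hkappa.le (Erl.q_pos ζ y).le)
  have habs : ∀ y, |H y| ≤ (1/mu) * Erl.q ζ y := by
    intro y
    rw [hHdef]
    simp only
    rw [abs_mul, abs_mul]
    have h1 : |Fa - if y ≤ a then (1:ℝ) else 0| ≤ 1 := by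
      rcases le_or_gt y a with h | h
      · rw [if_pos h, abs_le]; constructor <;> linarith
      · rw [if_neg (not_le.mpr h), abs_le]; constructor <;> linarith
    rw [abs_of_pos (by positivity : (0:ℝ) < 1/mu), abs_of_pos (hq_pos y)]
    have h2 := hq_pos y
    calc 1/mu * |Fa - if y ≤ a then (1:ℝ) else 0| * Erl.q ζ y
        ≤ 1/mu * 1 * Erl.q ζ y := by
          apply mul_le_mul_of_nonneg_right _ h2.le
          exact mul_le_mul_of_nonneg_left h1 (by positivity)
      _ = (1/mu) * Erl.q ζ y := by ring
  have hmeas_ind : Measurable (fun y : ℝ => if y ≤ a then (1:ℝ) else 0) := by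
    apply Measurable.ite _ measurable_const measurable_const
    exact measurableSet_Iic
  have hH_meas : Measurable H :=
    ((hmeas_ind.const_sub Fa).const_mul (1/mu)).mul (Erl.q_cont ζ).measurable
  have hH_int : Integrable H :=
    (hq_int.const_mul (1/mu)).mono' hH_meas.aestronglyMeasurable
      (Filter.Eventually.of_forall (fun y => by rw [Real.norm_eq_abs]; exact habs y))
  -- zero mean
  have hind_eq : (fun y => (if y ≤ a then (1:ℝ) else 0) * Erl.q ζ y)
      = (Set.Iic a).indicator (Erl.q ζ) := by
    funext y
    by_cases hy : y ≤ a
    · rw [if_pos hy, one_mul, Set.indicator_of_mem (by exact hy)]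
    · rw [if_neg hy, zero_mul, Set.indicator_of_notMem (by exact hy)]
  have hind_int : Integrable (fun y => (if y ≤ a then (1:ℝ) else 0) * Erl.q ζ y) := by
    rw [hind_eq]; exact hq_int.indicator measurableSet_Iic
  have hFaA : Fa = kappa * ∫ y in Set.Iic a, Erl.q ζ y := by
    rw [hFa]
    simp_rw [hnu]
    rw [integral_const_mul]
  have hkT : kappa * ∫ y, Erl.q ζ y = 1 := by
    rw [← hnu_norm]
    simp_rw [hnu]
    rw [integral_const_mul]
  have hH0 : ∫ y, H y = 0 := by
    have hsplit : ∀ y, H y = (1/mu) * (Fa * Erl.q ζ y)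
        - (1/mu) * ((if y ≤ a then (1:ℝ) else 0) * Erl.q ζ y) := by
      intro y; rw [hHdef]; ring
    rw [funext hsplit,
      integral_sub ((hq_int.const_mul Fa).const_mul (1/mu)) (hind_int.const_mul (1/mu)),
      integral_const_mul, integral_const_mul, integral_const_mul, hind_eq,
      integral_indicator measurableSet_Iic, hFaA]
    linear_combination (1/mu) * (∫ y in Set.Iic a, Erl.q ζ y) * hkT
  set g : ℝ → ℝ := fun x => ∫ y in Set.Iic x, H y with hgdef
  have hf2 : ∀ x, f' x = (Erl.q ζ x)⁻¹ * g x := by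
    intro x
    rw [hf' x, hgdef]
  have hgIic : ∀ x, |g x| ≤ (1/mu) * ∫ y in Set.Iic x, Erl.q ζ y := by
    intro x
    calc |g x| ≤ ∫ y in Set.Iic x, |H y| := by
          simpa [Real.norm_eq_abs] using
            norm_integral_le_integral_norm (μ := volume.restrict (Set.Iic x)) H
      _ ≤ ∫ y in Set.Iic x, (1/mu) * Erl.q ζ y :=
          setIntegral_mono_on hH_int.abs.integrableOn
            ((hq_int.const_mul (1/mu)).integrableOn) measurableSet_Iic (fun y _ => habs y)
      _ = (1/mu) * ∫ y in Set.Iic x, Erl.q ζ y := integral_const_mul _ _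
  have hgIoi : ∀ x, |g x| ≤ (1/mu) * ∫ y in Set.Ioi x, Erl.q ζ y := by
    intro x
    have hrep : g x = -∫ y in Set.Ioi x, H y := by
      have h1 := intervalIntegral.integral_Iic_add_Ioi (b := x)
        hH_int.integrableOn hH_int.integrableOn
      rw [hH0] at h1
      have : g x = ∫ y in Set.Iic x, H y := rfl
      linarith [this ▸ h1]
    rw [hrep, abs_neg]
    calc |∫ y in Set.Ioi x, H y| ≤ ∫ y in Set.Ioi x, |H y| := by
          simpa [Real.norm_eq_abs] using
            norm_integral_le_integral_norm (μ := volume.restrict (Set.Ioi x)) H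
      _ ≤ ∫ y in Set.Ioi x, (1/mu) * Erl.q ζ y :=
          setIntegral_mono_on hH_int.abs.integrableOn
            ((hq_int.const_mul (1/mu)).integrableOn) measurableSet_Ioi (fun y _ => habs y)
      _ = (1/mu) * ∫ y in Set.Ioi x, Erl.q ζ y := integral_const_mul _ _
  have hfq : ∀ x, |f' x| = (Erl.q ζ x)⁻¹ * |g x| := by
    intro x
    rw [hf2 x, abs_mul, abs_inv, abs_of_pos (hq_pos x)]
  -- B3 : exponential region
  have B3 : ∀ x, -ζ ≤ x → |f' x| ≤ 1/(mu * (-ζ)) := by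
    intro x hx
    have h1 : |g x| ≤ (1/mu) * (Real.exp (ζ*x + ζ^2/2) / (-ζ)) := by
      have h2 := hgIoi x
      rwa [Erl.integral_q_Ioi hz hx] at h2
    rw [hfq x, Erl.q_exp hx]
    have hE : (0:ℝ) < Real.exp (ζ*x+ζ^2/2) := Real.exp_pos _
    calc (Real.exp (ζ*x+ζ^2/2))⁻¹ * |g x|
        ≤ (Real.exp (ζ*x+ζ^2/2))⁻¹ * ((1/mu) * (Real.exp (ζ*x + ζ^2/2) / (-ζ))) :=
          mul_le_mul_of_nonneg_left h1 (by positivity)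
      _ = 1/(mu * (-ζ)) := by field_simp
  -- B1 : gaussian region, x < 0
  have B1 : ∀ x, x < 0 → |f' x| ≤ 1/(mu * (-x)) := by
    intro x hx0
    have hxz : x ≤ -ζ := by linarith
    have hIic_eq : ∫ y in Set.Iic x, Erl.q ζ y = ∫ y in Set.Iic x, Real.exp (-(y^2/2)) :=
      setIntegral_congr_fun measurableSet_Iic
        (fun y hy => Erl.q_gauss (le_trans (Set.mem_Iic.mp hy) hxz))
    have h1 : |g x| ≤ (1/mu) * (Real.exp (-(x^2/2)) / (-x)) := by
      refine (hgIic x).trans ?_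
      rw [hIic_eq]
      exact mul_le_mul_of_nonneg_left (Erl.mills_left hx0) (by positivity)
    rw [hfq x, Erl.q_gauss hxz]
    have hE : (0:ℝ) < Real.exp (-(x^2/2)) := Real.exp_pos _
    have hxne : x ≠ 0 := ne_of_lt hx0
    calc (Real.exp (-(x^2/2)))⁻¹ * |g x|
        ≤ (Real.exp (-(x^2/2)))⁻¹ * ((1/mu) * (Real.exp (-(x^2/2)) / (-x))) :=
          mul_le_mul_of_nonneg_left h1 (by positivity)
      _ = 1/(mu * (-x)) := by field_simp
  -- B2 : gaussian region, 0 < x ≤ -ζ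
  have B2 : ∀ x, 0 < x → x ≤ -ζ → |f' x| ≤ 1/(mu * x) := by
    intro x hx0 hxz
    have h1 : |g x| ≤ (1/mu) * (Real.exp (-(x^2/2)) / x) := by
      refine (hgIoi x).trans ?_
      exact mul_le_mul_of_nonneg_left (Erl.tail_bound hz hx0 hxz) (by positivity)
    rw [hfq x, Erl.q_gauss hxz]
    have hE : (0:ℝ) < Real.exp (-(x^2/2)) := Real.exp_pos _
    have hxne : x ≠ 0 := ne_of_gt hx0
    calc (Real.exp (-(x^2/2)))⁻¹ * |g x|
        ≤ (Real.exp (-(x^2/2)))⁻¹ * ((1/mu) * (Real.exp (-(x^2/2)) / x)) :=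
          mul_le_mul_of_nonneg_left h1 (by positivity)
      _ = 1/(mu * x) := by field_simp
  -- B4 : crude bound near 0
  have B4 : ∀ x, x ≤ -ζ → |x| ≤ 1/2 → |f' x| ≤ 3/mu := by
    intro x hxz hx
    have hIic_eq : ∫ y in Set.Iic x, Erl.q ζ y = ∫ y in Set.Iic x, Real.exp (-(y^2/2)) :=
      setIntegral_congr_fun measurableSet_Iic
        (fun y hy => Erl.q_gauss (le_trans (Set.mem_Iic.mp hy) hxz))
    have h1 : |g x| ≤ (1/mu) * Real.sqrt (2*Real.pi) := by
      refine (hgIic x).trans ?_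
      rw [hIic_eq]
      exact mul_le_mul_of_nonneg_left (Erl.gauss_Iic_le x) (by positivity)
    rw [hfq x, Erl.q_gauss hxz]
    have h2 : (Real.exp (-(x^2/2)))⁻¹ = Real.exp (x^2/2) := by
      rw [← Real.exp_neg]; congr 1; ring
    rw [h2]
    have h3 : Real.exp (x^2/2) ≤ Real.exp (1/8 : ℝ) := by
      rw [Real.exp_le_exp]
      nlinarith [sq_abs x, abs_nonneg x]
    have h4 : Real.exp (1/8 : ℝ) ≤ 8/7 := by
      have h5 := Real.add_one_le_exp (-(1/8) : ℝ)
      have h6 : (7/8:ℝ) ≤ Real.exp (-(1/8) : ℝ) := by linarith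
      calc Real.exp (1/8:ℝ) = (Real.exp (-(1/8:ℝ)))⁻¹ := by
            rw [← Real.exp_neg]; norm_num
        _ ≤ (7/8:ℝ)⁻¹ := by
            apply inv_anti₀ (by norm_num) h6
        _ = 8/7 := by norm_num
    have h5 : Real.sqrt (2*Real.pi) ≤ 13/5 := by
      rw [show (13/5:ℝ) = Real.sqrt ((13/5)^2) from (Real.sqrt_sq (by norm_num)).symm]
      apply Real.sqrt_le_sqrt
      nlinarith [Real.pi_lt_d2]
    have hmuinv : (0:ℝ) < 1/mu := by positivity
    have h6 : |g x| ≤ (1/mu) * (13/5) :=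
      h1.trans (mul_le_mul_of_nonneg_left h5 hmuinv.le)
    calc Real.exp (x^2/2) * |g x| ≤ (8/7) * ((1/mu) * (13/5)) :=
          mul_le_mul (h3.trans h4) h6 (abs_nonneg _) (by norm_num)
      _ ≤ 3/mu := by
          rw [show (3:ℝ)/mu = 3*(1/mu) by ring]
          linarith
  -- claim 2
  have claim2 : ∀ x, x ≤ -ζ → |f' x| ≤ 4/mu := by
    intro x hx
    rcases le_or_gt x (-(1/2)) with h | h
    · exact (B1 x (by linarith)).trans (Erl.aux_div1 hmu (by linarith))
    · rcases le_or_gt (1/2) x with h2 | h2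
      · exact (B2 x (by linarith) hx).trans (Erl.aux_div1 hmu h2)
      · exact (B4 x hx (abs_le.mpr ⟨by linarith, by linarith⟩)).trans (Erl.aux_div2 hmu)
  -- claim 3
  have claim3 : ∀ x, -ζ ≤ x → |f' x| ≤ 1/(mu * |ζ|) := by
    intro x hx
    rw [abs_of_neg hz]
    exact B3 x hx
  -- continuity
  have hg_rep : g = fun u => (∫ y in Set.Iic (0:ℝ), H y) + ∫ y in (0:ℝ)..u, H y := by
    funext u
    rw [hgdef]
    simp only
    rw [← intervalIntegral.integral_Iic_sub_Iic hH_int.integrableOn hH_int.integrableOn]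
    ring
  have hgcont : Continuous g := by
    rw [hg_rep]
    exact continuous_const.add (hH_int.continuous_primitive 0)
  have hcont : Continuous f' := by
    have hfeq : f' = fun x => (Erl.q ζ x)⁻¹ * g x := funext hf2
    rw [hfeq]
    exact ((Erl.q_cont ζ).inv₀ (fun x => (hq_pos x).ne')).mul hgcont
  -- derivative of q
  have hqderiv : ∀ x, HasDerivAt (Erl.q ζ) ((1/mu) * b x * Erl.q ζ x) x := by
    intro x
    have hfun : Erl.q ζ = fun t => Real.exp ((1 / mu) * ∫ y in (0:ℝ)..t, b y) := by
      rw [← hpq]; funext t; exact hp t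
    have h1 : HasDerivAt (fun t => ∫ y in (0:ℝ)..t, b y) (b x) x :=
      intervalIntegral.integral_hasDerivAt_right (b_int 0 x)
        b_cont.stronglyMeasurable.stronglyMeasurableAtFilter b_cont.continuousAt
    have h2 := (h1.const_mul (1/mu)).exp
    rw [hfun]
    refine h2.congr_deriv ?_
    simp only []
    ring
  -- claim 4
  have claim4 : ∀ x, ∃ L : ℝ, HasDerivWithinAt f' L (Set.Iic x) x ∧ |L| ≤ 2/mu ∧
      (x ≠ a → HasDerivAt f' L x) := by
    intro x
    have hqinv : HasDerivAt (fun t => (Erl.q ζ t)⁻¹)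
        (-((1/mu) * b x * Erl.q ζ x) / (Erl.q ζ x)^2) x := (hqderiv x).inv (hq_pos x).ne'
    have hLval : (-((1/mu) * b x * Erl.q ζ x) / (Erl.q ζ x)^2) * g x + (Erl.q ζ x)⁻¹ * H x
        = (1/mu) * (Fa - if x ≤ a then 1 else 0) - (b x/mu) * f' x := by
      rw [hf2 x, hHdef]
      simp only []
      have hqne : Erl.q ζ x ≠ 0 := (hq_pos x).ne'
      field_simp
      ring
    have hgd_at : x ≠ a → HasDerivAt g (H x) x := by
      intro hxa
      have hHcont : ContinuousAt H x := by
        rcases lt_or_gt_of_ne hxa with hlt | hgt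
        · have hev : H =ᶠ[nhds x] (fun y => (1/mu) * (Fa - 1) * Erl.q ζ y) := by
            filter_upwards [Iio_mem_nhds hlt] with y hy
            rw [hHdef]
            simp only []
            rw [if_pos (le_of_lt hy)]
          exact ((continuous_const.mul (Erl.q_cont ζ)).continuousAt).congr_of_eventuallyEq hev
        · have hev : H =ᶠ[nhds x] (fun y => (1/mu) * (Fa - 0) * Erl.q ζ y) := by
            filter_upwards [Ioi_mem_nhds hgt] with y hy
            rw [hHdef]
            simp only []
            rw [if_neg (not_le.mpr hy)]
          exact ((continuous_const.mul (Erl.q_cont ζ)).continuousAt).congr_of_eventuallyEq hev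
      rw [hg_rep]
      exact (intervalIntegral.integral_hasDerivAt_right hH_int.intervalIntegrable
        hH_meas.stronglyMeasurable.stronglyMeasurableAtFilter hHcont).const_add _
    have hgd_within : HasDerivWithinAt g (H x) (Set.Iic x) x := by
      by_cases hxa : x = a
      · subst hxa
        rw [hg_rep]
        refine (intervalIntegral.integral_hasDerivWithinAt_right hH_int.intervalIntegrable
          hH_meas.stronglyMeasurable.stronglyMeasurableAtFilter ?_).const_add _
        have hbase : ContinuousWithinAt (fun y => (1/mu) * (Fa - 1) * Erl.q ζ y)
            (Set.Iic x) x :=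
          (continuous_const.mul (Erl.q_cont ζ)).continuousWithinAt
        refine hbase.congr ?_ ?_
        · intro y hy
          rw [hHdef]
          simp only []
          rw [if_pos (Set.mem_Iic.mp hy)]
        · rw [hHdef]
          simp only []
          rw [if_pos le_rfl]
      · exact (hgd_at hxa).hasDerivWithinAt
    have hfeq : f' = fun t => (Erl.q ζ t)⁻¹ * g t := funext hf2
    refine ⟨(1/mu) * (Fa - if x ≤ a then 1 else 0) - (b x/mu) * f' x, ?_, ?_, ?_⟩
    · rw [hfeq]
      exact (hqinv.hasDerivWithinAt.mul hgd_within).congr_deriv (hLval.trans (by rw [hf2 x]))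
    rotate_left
    · intro hxa
      rw [hfeq]
      exact (hqinv.mul (hgd_at hxa)).congr_deriv (hLval.trans (by rw [hf2 x]))
    · -- bound
      have hbfs : |b x * f' x| ≤ 1 := by
        rcases le_or_gt (-ζ) x with h | h
        · have hbx : b x = mu * ζ := by
            rw [hb]
            split
            · have hx2 : x = -ζ := le_antisymm ‹_› h
              rw [hx2]; ring
            · rfl
          rw [hbx, abs_mul, abs_mul, abs_of_pos hmu, abs_of_neg hz]
          calc mu * -ζ * |f' x| ≤ mu * -ζ * (1/(mu * -ζ)) :=
                mul_le_mul_of_nonneg_left (B3 x h) (mul_pos hmu hmz).le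
            _ = 1 := mul_one_div_cancel (mul_pos hmu hmz).ne'
        · have hbx : b x = -(mu * x) := by rw [hb, if_pos (le_of_lt h)]
          rcases lt_trichotomy x 0 with h0 | h0 | h0
          · rw [hbx, neg_mul, abs_neg, abs_mul, abs_mul, abs_of_pos hmu, abs_of_neg h0]
            calc mu * -x * |f' x| ≤ mu * -x * (1/(mu * -x)) :=
                  mul_le_mul_of_nonneg_left (B1 x h0) (mul_pos hmu (by linarith : (0:ℝ) < -x)).le
              _ = 1 := mul_one_div_cancel (mul_pos hmu (by linarith : (0:ℝ) < -x)).ne'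
          · rw [hbx, h0]
            simp
          · rw [hbx, neg_mul, abs_neg, abs_mul, abs_mul, abs_of_pos hmu, abs_of_pos h0]
            calc mu * x * |f' x| ≤ mu * x * (1/(mu * x)) :=
                  mul_le_mul_of_nonneg_left (B2 x h0 (le_of_lt h)) (mul_pos hmu h0).le
              _ = 1 := mul_one_div_cancel (mul_pos hmu h0).ne'
      have h1 : |(1/mu) * (Fa - if x ≤ a then (1:ℝ) else 0)| ≤ 1/mu := by
        rw [abs_mul, abs_of_pos (by positivity : (0:ℝ) < 1/mu)]
        have h2 : |Fa - if x ≤ a then (1:ℝ) else 0| ≤ 1 := by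
          rcases le_or_gt x a with h | h
          · rw [if_pos h, abs_le]; constructor <;> linarith
          · rw [if_neg (not_le.mpr h), abs_le]; constructor <;> linarith
        calc 1/mu * |Fa - if x ≤ a then (1:ℝ) else 0| ≤ 1/mu * 1 :=
              mul_le_mul_of_nonneg_left h2 (by positivity)
          _ = 1/mu := mul_one _
      have h2 : |(b x/mu) * f' x| ≤ 1/mu := by
        rw [show (b x/mu) * f' x = (b x * f' x)/mu by ring, abs_div, abs_of_pos hmu]
        gcongr
      calc |(1/mu) * (Fa - if x ≤ a then (1:ℝ) else 0) - (b x/mu) * f' x|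
          ≤ |(1/mu) * (Fa - if x ≤ a then (1:ℝ) else 0)| + |(b x/mu) * f' x| := by
            rw [sub_eq_add_neg]
            exact (abs_add_le _ _).trans (by rw [abs_neg])
        _ ≤ 1/mu + 1/mu := add_le_add h1 h2
        _ = 2/mu := by ring
  exact ⟨hcont, claim2, claim3, claim4⟩
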